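/- Let n = km > 1 be a spoof odd perfect number with m composite, and let s be the positive integer with s² = k. If gcd(m, s) = 1, then (m+1)/s ≠ σ(s)/m, i.e., m·(m+1) ≠ s·σ(s). -/

import Mathlib

open ArithmeticFunction
open scoped ArithmeticFunction.sigma

lemma aux_le_sigma (n : ℕ) (hn : n ≠ 0) : n ≤ σ 1 n := by
  rw [sigma_one_apply]
  exact Finset.single_le_sum (f := _root_.id) (fun _ _ => Nat.zero_le _) (Nat.mem_divisors_self n hn)

lemma aux_mul_sigma_le (s : ℕ) (hs : 0 < s) : s * σ 1 s ≤ σ 1 (s ^ 2) := by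
  rw [sigma_one_apply, sigma_one_apply, Finset.mul_sum]
  have hinj : Set.InjOn (fun d => s * d) ↑s.divisors := fun a _ b _ h =>
    Nat.eq_of_mul_eq_mul_left hs h
  calc ∑ d ∈ s.divisors, s * d = ∑ e ∈ s.divisors.image (fun d => s * d), e := by
        rw [Finset.sum_image (fun a ha b hb h => hinj ha hb h)]
    _ ≤ ∑ e ∈ (s ^ 2).divisors, e := by
        apply Finset.sum_le_sum_of_subset
        intro e he
        simp only [Finset.mem_image] at he
        obtain ⟨d, hd, rfl⟩ := he
        rw [Nat.mem_divisors] at hd ⊢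
        exact ⟨by rw [pow_two]; exact mul_dvd_mul_left s hd.1, pow_ne_zero 2 hs.ne'⟩

theorem stmt_10 (k m s : ℕ) (hk : 1 < k) (hm : 1 < m) (hodd : Odd (k * m))
    (hspoof : σ 1 k * (m + 1) = 2 * (k * m)) (hcomp : ¬ m.Prime)
    (hs : 0 < s) (hsq : s ^ 2 = k) (hgcd : Nat.gcd m s = 1) :
    ((m : ℚ) + 1) / (s : ℚ) ≠ (σ 1 s : ℚ) / (m : ℚ) ∧ m * (m + 1) ≠ s * σ 1 s := by
  have key : m * (m + 1) ≠ s * σ 1 s := by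
    intro h
    -- s divides m + 1
    have hsd : s ∣ m + 1 := by
      have : s ∣ m * (m + 1) := h ▸ Dvd.intro _ rfl
      exact (Nat.Coprime.dvd_of_dvd_mul_left (Nat.coprime_comm.mp hgcd) this)
    obtain ⟨t, ht⟩ := hsd
    have ht1 : 1 ≤ t := by
      rcases Nat.eq_zero_or_pos t with h0 | h1
      · rw [h0, mul_zero] at ht; omega
      · exact h1
    -- spoof in terms of s
    rw [← hsq] at hspoof
    have hle : s * σ 1 s * (m + 1) ≤ 2 * (s ^ 2 * m) := by
      rw [← hspoof]
      exact Nat.mul_le_mul_right _ (aux_mul_sigma_le s hs)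
    rw [← h] at hle
    -- (m+1)^2 ≤ 2 s^2
    have hm1 : (m + 1) ^ 2 ≤ 2 * s ^ 2 := by
      have hmpos : 0 < m := by omega
      nlinarith [hle]
    have ht2 : t = 1 := by
      rw [ht, mul_pow] at hm1
      have h2 : t ^ 2 ≤ 2 := Nat.le_of_mul_le_mul_left (by linarith : s ^ 2 * t ^ 2 ≤ s ^ 2 * 2) (by positivity)
      nlinarith [ht1, h2]
    have hms : m + 1 = s := by rw [ht2, mul_one] at ht; exact ht
    -- then m = σ(m+1) ≥ m+1
    have hσ : m + 1 ≤ σ 1 s := hms ▸ aux_le_sigma (m + 1) (by omega)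
    rw [← hms] at h hσ
    have h5 : (m + 1) * (m + 1) ≤ (m + 1) * σ 1 (m + 1) := Nat.mul_le_mul_left _ hσ
    nlinarith [h, h5]
  refine ⟨?_, key⟩
  intro hq
  apply key
  have hs' : (s : ℚ) ≠ 0 := Nat.cast_ne_zero.mpr hs.ne'
  have hm' : (m : ℚ) ≠ 0 := Nat.cast_ne_zero.mpr (by omega)
  rw [div_eq_div_iff hs' hm'] at hq
  have : ((m * (m + 1) : ℕ) : ℚ) = ((s * σ 1 s : ℕ) : ℚ) := by
    push_cast
    linarith [hq]
  exact_mod_cast this
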